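/- If a function 𝓜 on pairs of states (second argument full rank) is additive and satisfies the data-processing inequality 𝓜(T(ρ),T(σ)) ≤ 𝓜(ρ,σ) for all quantum channels T, then the induced measure M_β(ρ,H) := 𝓜(ρ, ω_{β,H}) is catalytically monotone: whenever a Gibbs-preserving channel G satisfies G(ω_{β,H}⊗ω_{β,R}) = ω_{β,K}⊗ω_{β,R} and G(ρ⊗γ) = σ⊗γ for some catalyst state γ, then M_β(σ,K) ≤ M_β(ρ,H). -/

import Mathlib

open Matrix
open scoped Kronecker ComplexOrder

noncomputable section

/-- Matrix logarithm via spectral decomposition (0 for non-Hermitian input). -/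
def mlog {d : Type*} [Fintype d] [DecidableEq d] (A : Matrix d d ℂ) : Matrix d d ℂ :=
  if h : A.IsHermitian then
    (h.eigenvectorUnitary : Matrix d d ℂ) *
      Matrix.diagonal (fun i => (Real.log (h.eigenvalues i) : ℂ)) *
      (star (h.eigenvectorUnitary : Matrix d d ℂ))
  else 0

/-- Quantum relative entropy S(ρ‖σ) = Tr(ρ log ρ − ρ log σ). -/
def relEnt {d : Type*} [Fintype d] [DecidableEq d] (ρ σ : Matrix d d ℂ) : ℝ :=
  (Matrix.trace (ρ * mlog ρ - ρ * mlog σ)).re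

/-- Von Neumann entropy S(ρ) = −Tr(ρ log ρ). -/
def vnEnt {d : Type*} [Fintype d] [DecidableEq d] (ρ : Matrix d d ℂ) : ℝ :=
  -(Matrix.trace (ρ * mlog ρ)).re

/-- ρ is a density operator. -/
def IsDensity {d : Type*} [Fintype d] (ρ : Matrix d d ℂ) : Prop :=
  ρ.PosSemidef ∧ ρ.trace = 1

/-- Full-rank density operator. -/
def IsFaithfulState {d : Type*} [Fintype d] (σ : Matrix d d ℂ) : Prop :=
  σ.PosDef ∧ σ.trace = 1

/-- Apply a linear map blockwise (i.e. (id_k ⊗ T)). -/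
def blockApply {d e : Type*} [Fintype d] [DecidableEq d] [Fintype e] [DecidableEq e]
    (T : Matrix d d ℂ →ₗ[ℂ] Matrix e e ℂ) {k : Type*}
    (M : Matrix (k × d) (k × d) ℂ) : Matrix (k × e) (k × e) ℂ :=
  Matrix.of fun p q => T (Matrix.of fun i j => M (p.1, i) (q.1, j)) p.2 q.2

/-- Quantum channel: trace preserving and completely positive. -/
def IsQChannel {d e : Type*} [Fintype d] [DecidableEq d] [Fintype e] [DecidableEq e]
    (T : Matrix d d ℂ →ₗ[ℂ] Matrix e e ℂ) : Prop :=
  (∀ M : Matrix d d ℂ, (T M).trace = M.trace) ∧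
  (∀ (k : Type) [Fintype k] [DecidableEq k] (M : Matrix (k × d) (k × d) ℂ),
      M.PosSemidef → (blockApply T M).PosSemidef)

/-- Gibbs state ω_{β,H} = e^{−βH}/Tr e^{−βH}. -/
def gibbs {d : Type*} [Fintype d] [DecidableEq d] (β : ℝ) (H : Matrix d d ℂ) :
    Matrix d d ℂ :=
  (Matrix.trace (NormedSpace.exp ((-β : ℂ) • H)))⁻¹ • NormedSpace.exp ((-β : ℂ) • H)

/-- Non-equilibrium free energy difference ΔF_β(ρ,H) = (1/β) S(ρ‖ω_{β,H}). -/
def dF {d : Type*} [Fintype d] [DecidableEq d] (β : ℝ) (ρ H : Matrix d d ℂ) : ℝ :=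
  (1 / β) * relEnt ρ (gibbs β H)

/-- Partial trace over the second factor. -/
def ptraceRight {d₁ d₂ : Type*} [Fintype d₂]
    (M : Matrix (d₁ × d₂) (d₁ × d₂) ℂ) : Matrix d₁ d₁ ℂ :=
  Matrix.of fun i j => ∑ k, M (i, k) (j, k)

/-- Partial trace over the first factor. -/
def ptraceLeft {d₁ d₂ : Type*} [Fintype d₁]
    (M : Matrix (d₁ × d₂) (d₁ × d₂) ℂ) : Matrix d₂ d₂ ℂ :=
  Matrix.of fun i j => ∑ k, M (k, i) (k, j)

/-- n-fold tensor power of a matrix. -/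
def tpow {d : Type*} [Fintype d] (ρ : Matrix d d ℂ) (n : ℕ) :
    Matrix (Fin n → d) (Fin n → d) ℂ :=
  Matrix.of fun a b => ∏ i, ρ (a i) (b i)

/-- Tensor product of a finite family of matrices. -/
def tprodFam {k : ℕ} {c : Type*} [Fintype c] (γ : Fin k → Matrix c c ℂ) :
    Matrix (Fin k → c) (Fin k → c) ℂ :=
  Matrix.of fun a b => ∏ i, γ i (a i) (b i)

/-- Single-site marginal at site i of a state on an n-fold tensor product. -/
def marginal {d : Type*} [Fintype d] [DecidableEq d] {n : ℕ}
    (M : Matrix (Fin n → d) (Fin n → d) ℂ) (i : Fin n) : Matrix d d ℂ :=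
  Matrix.of fun a b => ∑ g : {j : Fin n // j ≠ i} → d,
    M (fun j => if h : j = i then a else g ⟨j, h⟩)
      (fun j => if h : j = i then b else g ⟨j, h⟩)

/-- Trace norm of a matrix: sum of singular values. -/
def traceNorm {d : Type*} [Fintype d] [DecidableEq d] (A : Matrix d d ℂ) : ℝ :=
  ∑ i, Real.sqrt ((Matrix.posSemidef_conjTranspose_mul_self A).1.eigenvalues i)


open NormedSpace

lemma myPosDefCTS {d : Type*} [Fintype d] [DecidableEq d]
    {B : Matrix d d ℂ} (h : IsUnit B) : (Bᴴ * B).PosDef := by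
  refine posDef_iff_dotProduct_mulVec.mpr ⟨(Matrix.posSemidef_conjTranspose_mul_self B).1, fun x hx => ?_⟩
  have hBx : B *ᵥ x ≠ 0 := by
    refine (Matrix.mulVec_injective_iff_isUnit.mpr h).ne_iff' ?_ |>.2 hx
    simp
  have : star x ⬝ᵥ ((Bᴴ * B) *ᵥ x) = star (B *ᵥ x) ⬝ᵥ (B *ᵥ x) := by
    rw [← mulVec_mulVec, dotProduct_mulVec, star_mulVec]
  rw [this]
  exact dotProduct_star_self_pos_iff.mpr hBx

lemma myExpPosDef {d : Type*} [Fintype d] [DecidableEq d]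
    {A : Matrix d d ℂ} (hA : A.IsHermitian) : (exp A).PosDef := by
  set B := exp ((1/2 : ℂ) • A) with hB
  have hBH : B.IsHermitian := by
    apply Matrix.IsHermitian.exp
    unfold Matrix.IsHermitian
    rw [conjTranspose_smul, hA.eq]
    norm_num
  have hexp : exp A = B * B := by
    rw [hB, ← Matrix.exp_add_of_commute _ _ (Commute.refl _), ← add_smul]
    norm_num
  have : exp A = Bᴴ * B := by rw [hexp, hBH.eq]
  rw [this]
  exact myPosDefCTS (Matrix.isUnit_exp _)

lemma myPosDefTracePos {d : Type*} [Fintype d] [DecidableEq d] [Nonempty d]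
    {M : Matrix d d ℂ} (hM : M.PosDef) : 0 < M.trace := by
  have hd : ∀ i, 0 < M i i := by
    intro i
    have h2 := hM.dotProduct_mulVec_pos (x := Pi.single i 1) (by
      intro hcon
      have := congr_fun hcon i
      simp [Pi.single_eq_same] at this)
    have heq : star (Pi.single i 1 : d → ℂ) ⬝ᵥ (M *ᵥ Pi.single i 1) = M i i := by
      simp [dotProduct, mulVec, Pi.single_apply, star, apply_ite, Finset.sum_ite_eq,
        Finset.mul_sum, mul_ite, Complex.ext_iff, Finset.sum_ite_eq', ite_mul]
    rwa [heq] at h2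
  exact Finset.sum_pos (fun i _ => hd i) Finset.univ_nonempty

lemma mySmulPosDef {d : Type*} [Fintype d] [DecidableEq d]
    {M : Matrix d d ℂ} (hM : M.PosDef) {r : ℝ} (hr : 0 < r) : ((r : ℂ) • M).PosDef := by
  refine posDef_iff_dotProduct_mulVec.mpr ⟨?_, ?_⟩
  · unfold Matrix.IsHermitian
    rw [conjTranspose_smul, hM.1.eq]
    norm_num
  · intro x hx
    have h1 := hM.dotProduct_mulVec_pos hx
    have : star x ⬝ᵥ (((r : ℂ) • M) *ᵥ x) = (r : ℂ) * (star x ⬝ᵥ (M *ᵥ x)) := by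
      rw [smul_mulVec, dotProduct_smul, smul_eq_mul]
    rw [this]
    rw [Complex.lt_def] at h1 ⊢
    constructor
    · simp only [Complex.mul_re, Complex.ofReal_re, Complex.ofReal_im, Complex.zero_re] at *
      nlinarith [h1.1, h1.2]
    · simp only [Complex.mul_im, Complex.ofReal_re, Complex.ofReal_im, Complex.zero_im] at *
      rw [← h1.2]; ring

lemma myGibbsFaithful {d : Type*} [Fintype d] [DecidableEq d] [Nonempty d]
    (β : ℝ) {H : Matrix d d ℂ} (hH : H.IsHermitian) : IsFaithfulState (gibbs β H) := by
  have hA : ((-β : ℂ) • H).IsHermitian := by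
    unfold Matrix.IsHermitian
    rw [conjTranspose_smul, hH.eq]
    congr 1
    simp [Complex.ext_iff]
  have hE : (exp ((-β : ℂ) • H)).PosDef := myExpPosDef hA
  have hc : 0 < (exp ((-β : ℂ) • H)).trace := myPosDefTracePos hE
  set c := (exp ((-β : ℂ) • H)).trace with hcdef
  have hcre : c = ((c.re : ℝ) : ℂ) := by
    rw [Complex.lt_def] at hc
    simp [Complex.ext_iff, ← hc.2]
  have hcne : c ≠ 0 := hc.ne'
  have hrepos : 0 < c.re := by rw [Complex.lt_def] at hc; simpa using hc.1
  have hinv : c⁻¹ = (((c.re)⁻¹ : ℝ) : ℂ) := by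
    conv_lhs => rw [hcre]
    exact (Complex.ofReal_inv _).symm
  constructor
  · show Matrix.PosDef (c⁻¹ • _)
    rw [hinv]
    exact mySmulPosDef hE (by positivity)
  · show Matrix.trace (c⁻¹ • _) = 1
    rw [trace_smul, ← hcdef, smul_eq_mul, inv_mul_cancel₀ hcne]

lemma myKronConjTranspose {d₁ d₂ : Type*} [Fintype d₁] [Fintype d₂]
    (A : Matrix d₁ d₁ ℂ) (B : Matrix d₂ d₂ ℂ) : (A ⊗ₖ B)ᴴ = Aᴴ ⊗ₖ Bᴴ := by
  ext p q
  simp [conjTranspose_apply, kroneckerMap_apply]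

lemma myKronPosSemidef {d₁ d₂ : Type*} [Fintype d₁] [DecidableEq d₁] [Fintype d₂] [DecidableEq d₂]
    {A : Matrix d₁ d₁ ℂ} {B : Matrix d₂ d₂ ℂ} (hA : A.PosSemidef) (hB : B.PosSemidef) :
    (A ⊗ₖ B).PosSemidef := by
  exact hA.kronecker hB

lemma myKronPosDef {d₁ d₂ : Type*} [Fintype d₁] [DecidableEq d₁] [Fintype d₂] [DecidableEq d₂]
    {A : Matrix d₁ d₁ ℂ} {B : Matrix d₂ d₂ ℂ} (hA : A.PosDef) (hB : B.PosDef) :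
    (A ⊗ₖ B).PosDef := by
  exact hA.kronecker hB

lemma myKronDensity {d₁ d₂ : Type*} [Fintype d₁] [DecidableEq d₁] [Fintype d₂] [DecidableEq d₂]
    {A : Matrix d₁ d₁ ℂ} {B : Matrix d₂ d₂ ℂ} (hA : IsDensity A) (hB : IsDensity B) :
    IsDensity (A ⊗ₖ B) :=
  ⟨myKronPosSemidef hA.1 hB.1, by rw [trace_kronecker, hA.2, hB.2, mul_one]⟩

lemma myKronFaithful {d₁ d₂ : Type*} [Fintype d₁] [DecidableEq d₁] [Fintype d₂] [DecidableEq d₂]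
    {A : Matrix d₁ d₁ ℂ} {B : Matrix d₂ d₂ ℂ} (hA : IsFaithfulState A) (hB : IsFaithfulState B) :
    IsFaithfulState (A ⊗ₖ B) :=
  ⟨myKronPosDef hA.1 hB.1, by rw [trace_kronecker, hA.2, hB.2, mul_one]⟩

lemma myNonemptyOfDensity {d : Type*} [Fintype d] {ρ : Matrix d d ℂ} (h : IsDensity ρ) :
    Nonempty d := by
  by_contra hc
  have : IsEmpty d := not_nonempty_iff.mp hc
  have h0 : ρ.trace = 0 := by simp [Matrix.trace]
  rw [h.2] at h0
  exact one_ne_zero h0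

lemma mySumRot {α β γ : Type*} [Fintype α] [Fintype β] [Fintype γ]
    (f : α → β → γ → ℂ) :
    ∑ a, ∑ b, ∑ c, f a b c = ∑ c, ∑ b, ∑ a, f a b c := by
  rw [Finset.sum_comm]
  rw [show (∑ b : β, ∑ a : α, ∑ c : γ, f a b c) = ∑ b : β, ∑ c : γ, ∑ a : α, f a b c
      from Finset.sum_congr rfl fun b _ => Finset.sum_comm]
  exact Finset.sum_comm

lemma myPtraceRightPosSemidef {d₁ d₂ : Type*} [Fintype d₁] [Fintype d₂] [DecidableEq d₂]
    {M : Matrix (d₁ × d₂) (d₁ × d₂) ℂ} (hM : M.PosSemidef) : (ptraceRight M).PosSemidef := by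
  refine posSemidef_iff_dotProduct_mulVec.mpr ⟨?_, ?_⟩
  · ext i j
    simp only [conjTranspose_apply, ptraceRight, of_apply, star_sum]
    refine Finset.sum_congr rfl fun k _ => ?_
    rw [← conjTranspose_apply, hM.1.eq]
  · intro x
    set y : d₂ → (d₁ × d₂ → ℂ) := fun k p => if p.2 = k then x p.1 else 0 with hy
    have key : star x ⬝ᵥ ((ptraceRight M) *ᵥ x) = ∑ k : d₂, star (y k) ⬝ᵥ (M *ᵥ y k) := by
      simp only [dotProduct, mulVec, Pi.star_apply, ptraceRight, of_apply, hy,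
        Fintype.sum_prod_type, apply_ite (star : ℂ → ℂ), star_zero, ite_mul, zero_mul,
        mul_ite, mul_zero, Finset.mul_sum, Finset.sum_mul]
      rw [mySumRot]
      refine Finset.sum_congr rfl fun k _ => ?_
      conv_lhs => rw [Finset.sum_comm]
      refine Finset.sum_congr rfl fun i _ => ?_
      rw [Finset.sum_comm]
      simp [Finset.sum_ite_eq']
    rw [key]
    exact Finset.sum_nonneg fun k _ => hM.dotProduct_mulVec_nonneg (y k)

lemma myPtraceRightKron {d₁ d₂ : Type*} [Fintype d₁] [Fintype d₂]
    (A : Matrix d₁ d₁ ℂ) (B : Matrix d₂ d₂ ℂ) :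
    ptraceRight (A ⊗ₖ B) = B.trace • A := by
  ext i j
  simp [ptraceRight, Matrix.trace, Matrix.diag, Finset.sum_mul, mul_comm, Finset.mul_sum]

lemma myChannelPosSemidef {d e : Type*} [Fintype d] [DecidableEq d] [Fintype e] [DecidableEq e]
    {T : Matrix d d ℂ →ₗ[ℂ] Matrix e e ℂ} (hT : IsQChannel T)
    {X : Matrix d d ℂ} (hX : X.PosSemidef) : (T X).PosSemidef := by
  set M : Matrix (Unit × d) (Unit × d) ℂ := X.submatrix Prod.snd Prod.snd with hM
  have hMps : M.PosSemidef := hX.submatrix Prod.snd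
  have h2 := hT.2 Unit M hMps
  have heq : T X = (blockApply T M).submatrix (fun i => (Unit.unit, i)) (fun j => (Unit.unit, j)) := by
    ext i j
    simp only [blockApply, submatrix_apply, of_apply, hM]
    rfl
  rw [heq]
  exact h2.submatrix _

theorem additivity_dpi_implies_catalytic_monotone
    (β : ℝ) (hβ : 0 < β)
    (𝓜 : ∀ (d : Type) [Fintype d] [DecidableEq d], Matrix d d ℂ → Matrix d d ℂ → ℝ)
    (hadd : ∀ (d₁ d₂ : Type) [Fintype d₁] [DecidableEq d₁] [Fintype d₂] [DecidableEq d₂]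
        (ρ₁ σ₁ : Matrix d₁ d₁ ℂ) (ρ₂ σ₂ : Matrix d₂ d₂ ℂ),
        IsDensity ρ₁ → IsDensity ρ₂ → IsFaithfulState σ₁ → IsFaithfulState σ₂ →
        𝓜 (d₁ × d₂) (ρ₁ ⊗ₖ ρ₂) (σ₁ ⊗ₖ σ₂) = 𝓜 d₁ ρ₁ σ₁ + 𝓜 d₂ ρ₂ σ₂)
    (hDPI : ∀ (d e : Type) [Fintype d] [DecidableEq d] [Fintype e] [DecidableEq e]
        (T : Matrix d d ℂ →ₗ[ℂ] Matrix e e ℂ), IsQChannel T →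
        ∀ (ρ σ : Matrix d d ℂ), IsDensity ρ → IsFaithfulState σ →
        𝓜 e (T ρ) (T σ) ≤ 𝓜 d ρ σ)
    {dS dS' dA : Type} [Fintype dS] [DecidableEq dS] [Fintype dS'] [DecidableEq dS']
    [Fintype dA] [DecidableEq dA]
    (G : Matrix (dS × dA) (dS × dA) ℂ →ₗ[ℂ] Matrix (dS' × dA) (dS' × dA) ℂ)
    (hG : IsQChannel G)
    (H : Matrix dS dS ℂ) (K : Matrix dS' dS' ℂ) (R : Matrix dA dA ℂ)
    (hH : H.IsHermitian) (hK : K.IsHermitian) (hR : R.IsHermitian)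
    (hGP : G (gibbs β H ⊗ₖ gibbs β R) = gibbs β K ⊗ₖ gibbs β R)
    (ρ : Matrix dS dS ℂ) (hρ : IsDensity ρ)
    (γ : Matrix dA dA ℂ) (hγ : IsDensity γ)
    (σ : Matrix dS' dS' ℂ)
    (hact : G (ρ ⊗ₖ γ) = σ ⊗ₖ γ) :
    𝓜 dS' σ (gibbs β K) ≤ 𝓜 dS ρ (gibbs β H) := by
  have hneS : Nonempty dS := myNonemptyOfDensity hρ
  have hneA : Nonempty dA := myNonemptyOfDensity hγ
  have hωH := myGibbsFaithful β hH
  have hωR := myGibbsFaithful β hR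
  have hργ : IsDensity (ρ ⊗ₖ γ) := myKronDensity hρ hγ
  have hσγps : (σ ⊗ₖ γ).PosSemidef := by
    rw [← hact]; exact myChannelPosSemidef hG hργ.1
  have htrσ : σ.trace = 1 := by
    have h1 : (σ ⊗ₖ γ).trace = 1 := by rw [← hact, hG.1, hργ.2]
    rwa [trace_kronecker, hγ.2, mul_one] at h1
  have hσps : σ.PosSemidef := by
    have h1 := myPtraceRightPosSemidef hσγps
    rwa [myPtraceRightKron, hγ.2, one_smul] at h1
  have hσ : IsDensity σ := ⟨hσps, htrσ⟩
  have hneS' : Nonempty dS' := myNonemptyOfDensity hσ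
  have hωK := myGibbsFaithful β hK
  have hωHR := myKronFaithful hωH hωR
  have hωKR := myKronFaithful hωK hωR
  have hdpi := hDPI _ _ G hG (ρ ⊗ₖ γ) (gibbs β H ⊗ₖ gibbs β R) hργ hωHR
  rw [hact, hGP] at hdpi
  rw [hadd _ _ σ (gibbs β K) γ (gibbs β R) hσ hγ hωK hωR,
      hadd _ _ ρ (gibbs β H) γ (gibbs β R) hρ hγ hωH hωR] at hdpi
  linarith

end
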